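/- (Colorful Helly theorem of Lovász and Bárány) Let d ≥ 1 and let F₁, …, F_{d+1} be finite nonempty families of convex sets in ℝ^d such that S₁ ∩ S₂ ∩ ⋯ ∩ S_{d+1} ≠ ∅ for every choice of S_i ∈ F_i, i = 1, …, d+1. Then there exists an index i ∈ {1, …, d+1} such that ⋂_{S ∈ F_i} S ≠ ∅. -/

import Mathlib

set_option linter.unusedSectionVars false


open Finset

namespace ColorfulHellyAux

variable {E : Type*} [NormedAddCommGroup E] [InnerProductSpace ℝ E]
variable {ι : Type*} [Fintype ι]

/-- The cone generated by the vectors `f i`, `i ∈ s`. -/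
def coneOn (f : ι → E) (s : Finset ι) : Set E :=
  {y | ∃ l : ι → ℝ, (∀ i, 0 ≤ l i) ∧ y = ∑ i ∈ s, l i • f i}

lemma coneOn_mono (f : ι → E) {t s : Finset ι} (h : t ⊆ s) : coneOn f t ⊆ coneOn f s := by
  classical
  rintro y ⟨l, hl, rfl⟩
  refine ⟨fun i => if i ∈ t then l i else 0, ?_, ?_⟩
  · intro i
    dsimp only
    split
    · exact hl i
    · exact le_refl 0
  · rw [← Finset.sum_subset h (fun i _ hit => by simp [hit])]
    exact (Finset.sum_congr rfl fun i hit => by simp [hit]).symm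

lemma caratheodory_coneOn (f : ι → E) :
    ∀ (n : ℕ) (s : Finset ι), s.card ≤ n → ∀ y ∈ coneOn f s,
      ∃ t ⊆ s, LinearIndependent ℝ (fun i : t => f i) ∧ y ∈ coneOn f t := by
  classical
  intro n
  induction n with
  | zero =>
    intro s hs y hy
    have hse : s = ∅ := Finset.card_eq_zero.mp (Nat.le_zero.mp hs)
    subst hse
    refine ⟨∅, Finset.Subset.refl _, ?_, hy⟩
    have : IsEmpty {x // x ∈ (∅ : Finset ι)} := by
      constructor; rintro ⟨x, hx⟩; simp at hx
    exact linearIndependent_empty_type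
  | succ n ih =>
    intro s hs y hy
    by_cases hli : LinearIndependent ℝ (fun i : s => f i)
    · exact ⟨s, Finset.Subset.refl _, hli, hy⟩
    obtain ⟨l, hl, hySum⟩ := hy
    obtain ⟨g0, hg0, i₁, hgi₁⟩ := Fintype.not_linearIndependent_iff.mp hli
    have hkey : ∃ g : ι → ℝ, (∑ i ∈ s, g i • f i = 0) ∧ (∀ i, i ∉ s → g i = 0) ∧
        ∃ i ∈ s, 0 < g i := by
      set g : ι → ℝ := fun i => if h : i ∈ s then g0 ⟨i, h⟩ else 0 with hgdef
      have hgsum : ∑ i ∈ s, g i • f i = 0 := by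
        rw [← Finset.sum_attach s (fun i => g i • f i), ← hg0, Finset.univ_eq_attach]
        refine Finset.sum_congr rfl fun i _ => ?_
        simp [hgdef]
      have hgout : ∀ i, i ∉ s → g i = 0 := fun i hi => by simp [hgdef, hi]
      have hgval : g (i₁ : ι) = g0 i₁ := by simp [hgdef]
      rcases hgi₁.lt_or_gt with hneg | hpos
      · refine ⟨-g, ?_, fun i hi => by simp [hgout i hi], i₁, i₁.2, ?_⟩
        · simp only [Pi.neg_apply, neg_smul, Finset.sum_neg_distrib, hgsum, neg_zero]
        · simp only [Pi.neg_apply, hgval]; linarith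
      · exact ⟨g, hgsum, hgout, i₁, i₁.2, by rw [hgval]; exact hpos⟩
    obtain ⟨g, hgsum, hgout, i₂, hi₂s, hgi₂⟩ := hkey
    set P := s.filter (fun i => 0 < g i) with hP
    have hPne : P.Nonempty := ⟨i₂, Finset.mem_filter.mpr ⟨hi₂s, hgi₂⟩⟩
    obtain ⟨i₀, hi₀P, hi₀min⟩ := Finset.exists_min_image P (fun i => l i / g i) hPne
    obtain ⟨hi₀s, hgi₀⟩ := Finset.mem_filter.mp hi₀P
    set c := l i₀ / g i₀ with hc
    have hc0 : 0 ≤ c := div_nonneg (hl i₀) hgi₀.le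
    set l' : ι → ℝ := fun i => l i - c * g i with hl'
    have hl'0 : ∀ i, 0 ≤ l' i := by
      intro i
      by_cases his : i ∈ s
      · by_cases hgi : 0 < g i
        · have hmin := hi₀min i (Finset.mem_filter.mpr ⟨his, hgi⟩)
          simp only [hl', sub_nonneg]
          exact (le_div_iff₀ hgi).mp hmin
        · have hgle : g i ≤ 0 := not_lt.mp hgi
          simp only [hl']
          nlinarith [hl i]
      · simp [hl', hgout i his, hl i]
    have hl'i₀ : l' i₀ = 0 := by
      simp only [hl', hc]
      field_simp
      ring
    have hysum' : y = ∑ i ∈ s.erase i₀, l' i • f i := by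
      rw [Finset.sum_erase _ (by rw [hl'i₀, zero_smul])]
      have hexp : ∑ i ∈ s, l' i • f i = (∑ i ∈ s, l i • f i) - c • ∑ i ∈ s, g i • f i := by
        rw [Finset.smul_sum, ← Finset.sum_sub_distrib]
        refine Finset.sum_congr rfl fun i _ => ?_
        simp only [hl', sub_smul, mul_smul]
      rw [hexp, hgsum, smul_zero, sub_zero, hySum]
    have hcard : (s.erase i₀).card ≤ n := by
      have := Finset.card_erase_of_mem hi₀s
      omega
    obtain ⟨t, hts, hti, hyt⟩ := ih (s.erase i₀) hcard y ⟨l', hl'0, hysum'⟩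
    exact ⟨t, hts.trans (Finset.erase_subset _ _), hti, hyt⟩

lemma isClosed_coneOn_of_linearIndependent [FiniteDimensional ℝ E] (f : ι → E) (t : Finset ι)
    (h : LinearIndependent ℝ (fun i : t => f i)) : IsClosed (coneOn f t) := by
  classical
  let L : ({x // x ∈ t} → ℝ) →ₗ[ℝ] E :=
    { toFun := fun g => ∑ i, g i • f (i : ι)
      map_add' := fun a b => by
        simp only [Pi.add_apply, add_smul, Finset.sum_add_distrib]
      map_smul' := fun r a => by
        simp only [Pi.smul_apply, smul_eq_mul, RingHom.id_apply, Finset.smul_sum, mul_smul] }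
  have hker : LinearMap.ker L = ⊥ := by
    rw [LinearMap.ker_eq_bot']
    intro g hg
    funext i
    exact Fintype.linearIndependent_iff.mp h g hg i
  have hce := LinearMap.isClosedEmbedding_of_injective hker
  have himg : coneOn f t = L '' {g | ∀ i, 0 ≤ g i} := by
    ext y
    constructor
    · rintro ⟨l, hl, rfl⟩
      refine ⟨fun i => l (i : ι), fun i => hl _, ?_⟩
      show ∑ i : {x // x ∈ t}, l (i : ι) • f (i : ι) = _
      rw [Finset.univ_eq_attach, Finset.sum_attach t (fun i => l i • f i)]
    · rintro ⟨g, hg, rfl⟩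
      refine ⟨fun i => if h : i ∈ t then g ⟨i, h⟩ else 0, ?_, ?_⟩
      · intro i
        by_cases h : i ∈ t <;> simp [h, hg _]
      · show _ = ∑ i ∈ t, _
        rw [← Finset.sum_attach t (fun i => (if h : (i : ι) ∈ t then g ⟨i, h⟩ else 0) • f i)]
        show ∑ i : {x // x ∈ t}, g i • f (i : ι) = _
        rw [Finset.univ_eq_attach]
        refine Finset.sum_congr rfl fun i _ => ?_
        simp
  rw [himg]
  apply hce.isClosedMap
  have horth : {g : {x // x ∈ t} → ℝ | ∀ i, 0 ≤ g i} = ⋂ i, {g | 0 ≤ g i} := by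
    ext g; simp [Set.mem_iInter]
  rw [horth]
  exact isClosed_iInter fun i => isClosed_le continuous_const (continuous_apply i)

lemma isClosed_coneOn [FiniteDimensional ℝ E] (f : ι → E) (s : Finset ι) :
    IsClosed (coneOn f s) := by
  classical
  have hrw : coneOn f s =
      ⋃ t ∈ {t : Finset ι | t ⊆ s ∧ LinearIndependent ℝ (fun i : t => f i)}, coneOn f t := by
    ext y
    simp only [Set.mem_iUnion, Set.mem_setOf_eq]
    constructor
    · intro hy
      obtain ⟨t, hts, hli, hyt⟩ := caratheodory_coneOn f s.card s le_rfl y hy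
      exact ⟨t, ⟨hts, hli⟩, hyt⟩
    · rintro ⟨t, ⟨hts, _⟩, hyt⟩
      exact coneOn_mono f hts hyt
  rw [hrw]
  exact Set.Finite.isClosed_biUnion (Set.toFinite _) fun t ht =>
    isClosed_coneOn_of_linearIndependent f t ht.2

theorem _root_.ConvexCone.hyperplane_separation_of_nonempty_of_isClosed_of_nmem
    [CompleteSpace E] (K : ConvexCone ℝ E) (ne : (K : Set E).Nonempty)
    (hc : IsClosed (K : Set E)) {b : E} (disj : b ∉ K) :
    ∃ y : E, (∀ x ∈ K, 0 ≤ @inner ℝ _ _ x y) ∧ @inner ℝ _ _ y b < 0 := by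
  obtain ⟨x, hx⟩ := ne
  have h0 : (0 : E) ∈ K := by
    have h1 : (0 : ℝ) ∈ closure (Set.Ioi (0 : ℝ)) := by
      rw [closure_Ioi]; exact Set.mem_Ici.mpr le_rfl
    have h2 : IsClosed ((fun t : ℝ => t • x) ⁻¹' (K : Set E)) := hc.preimage (by fun_prop)
    have h3 := h2.closure_subset_iff.mpr (fun t ht => K.smul_mem ht hx) h1
    simpa using h3
  let C : ProperCone ℝ E :=
    { carrier := (K : Set E)
      add_mem' := fun ha hb => K.add_mem ha hb
      zero_mem' := h0
      smul_mem' := by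
        intro c z hz
        rcases c.2.eq_or_lt with h | h
        · have hc0 : c = 0 := NNReal.eq h.symm
          rw [hc0, zero_smul]; exact h0
        · have := K.smul_mem h hz; exact this
      isClosed' := hc }
  obtain ⟨y, hy1, hy2⟩ := C.hyperplane_separation' (x₀ := b) disj
  exact ⟨y, hy1, by rw [real_inner_comm]; exact hy2⟩

/-- The inner dual cone of a set. -/
def _root_.Set.innerDualCone (s : Set E) : ConvexCone ℝ E where
  carrier := {y | ∀ x ∈ s, 0 ≤ @inner ℝ _ _ x y}
  smul_mem' c hc y hy x hx := by
    rw [real_inner_smul_right]; exact mul_nonneg hc.le (hy x hx)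
  add_mem' u hu v hv x hx := by
    rw [inner_add_right]; exact add_nonneg (hu x hx) (hv x hx)

theorem pointed_innerDualCone (s : Set E) : s.innerDualCone.Pointed := by
  intro x _
  simp

theorem mem_innerDualCone (y : E) (s : Set E) :
    y ∈ s.innerDualCone ↔ ∀ x ∈ s, 0 ≤ @inner ℝ _ _ x y := Iff.rfl

lemma mem_coneOn_univ_of_dual [FiniteDimensional ℝ E] [CompleteSpace E] (f : ι → E) {u : E}
    (h : ∀ c : E, (∀ i, 0 ≤ @inner ℝ _ _ (f i) c) → 0 ≤ @inner ℝ _ _ c u) :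
    u ∈ coneOn f Finset.univ := by
  classical
  by_contra hu
  let K : ConvexCone ℝ E :=
    { carrier := coneOn f Finset.univ
      smul_mem' := by
        rintro a ha y ⟨l, hl, rfl⟩
        exact ⟨fun i => a * l i, fun i => mul_nonneg ha.le (hl i), by
          rw [Finset.smul_sum]
          exact Finset.sum_congr rfl fun i _ => (mul_smul a (l i) (f i)).symm⟩
      add_mem' := by
        rintro y ⟨l, hl, rfl⟩ z ⟨m, hm, rfl⟩
        exact ⟨fun i => l i + m i, fun i => add_nonneg (hl i) (hm i), by
          rw [← Finset.sum_add_distrib]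
          exact Finset.sum_congr rfl fun i _ => (add_smul _ _ _).symm⟩ }
  have hne : (K : Set E).Nonempty := ⟨0, ⟨fun _ => 0, fun _ => le_refl 0, by simp⟩⟩
  have hcl : IsClosed (K : Set E) := isClosed_coneOn f Finset.univ
  obtain ⟨c, hc1, hc2⟩ := K.hyperplane_separation_of_nonempty_of_isClosed_of_nmem hne hcl hu
  have hfge : ∀ i, 0 ≤ @inner ℝ _ _ (f i) c := by
    intro i
    apply hc1
    refine ⟨fun j => if j = i then 1 else 0, ?_, ?_⟩
    · intro j; dsimp only; split <;> norm_num
    · have hterm : ∀ j, (if j = i then (1 : ℝ) else 0) • f j = if j = i then f j else 0 := by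
        intro j; split <;> simp
      rw [Finset.sum_congr rfl fun j _ => hterm j, Finset.sum_ite_eq' Finset.univ i f]
      simp
  have := h c hfge
  linarith [hc2]

end ColorfulHellyAux


open ColorfulHellyAux in
/-- **Colorful Helly theorem of Lovász and Bárány** ([col-hell]).
Let `F₁, …, F_{d+1}` be finite nonempty families of convex sets in `ℝ^d` such that
`S₁ ∩ ⋯ ∩ S_{d+1} ≠ ∅` for every colorful choice `S_i ∈ F_i`. Then for some `i` the whole
family `F_i` has nonempty intersection. -/
theorem colorful_helly_euclidean (d : ℕ) (hd : 1 ≤ d)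
    (F : Fin (d + 1) → Finset (Set (EuclideanSpace ℝ (Fin d))))
    (hconv : ∀ i, ∀ S ∈ F i, Convex ℝ S)
    (hne : ∀ i, (F i).Nonempty)
    (hcolor : ∀ S : Fin (d + 1) → Set (EuclideanSpace ℝ (Fin d)),
      (∀ i, S i ∈ F i) → (⋂ i, S i).Nonempty) :
    ∃ i, (⋂₀ ((F i : Finset (Set (EuclideanSpace ℝ (Fin d)))) :
      Set (Set (EuclideanSpace ℝ (Fin d))))).Nonempty := by
  classical
  -- the type of colorful tuples
  let T : Type _ := ∀ i : Fin (d + 1), {S : Set (EuclideanSpace ℝ (Fin d)) // S ∈ F i}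
  haveI hTne : Nonempty T := ⟨fun i => ⟨(hne i).choose, (hne i).choose_spec⟩⟩
  -- witnesses of colorful intersections
  have hwex : ∀ σ : T, ∃ z : (EuclideanSpace ℝ (Fin d)), z ∈ ⋂ i, (σ i : Set (EuclideanSpace ℝ (Fin d))) :=
    fun σ => hcolor (fun i => (σ i : Set (EuclideanSpace ℝ (Fin d)))) (fun i => (σ i).2)
  choose w hw using hwex
  have hwmem : ∀ (σ : T) (i : Fin (d + 1)), w σ ∈ (σ i : Set (EuclideanSpace ℝ (Fin d))) :=
    fun σ i => Set.mem_iInter.mp (hw σ) i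
  -- polytopes inscribed in the sets
  set Q : T → Fin (d + 1) → Set (EuclideanSpace ℝ (Fin d)) :=
    (fun σ i => convexHull ℝ (w '' {τ : T | τ i = σ i})) with hQdef
  have hQconv : ∀ σ i, Convex ℝ (Q σ i) := fun σ i => convex_convexHull ℝ _
  have hQsub : ∀ σ i, Q σ i ⊆ (σ i : Set (EuclideanSpace ℝ (Fin d))) := by
    intro σ i
    apply convexHull_min _ (hconv i _ (σ i).2)
    rintro z ⟨τ, hτ, rfl⟩
    have h1 := hwmem τ i
    rwa [hτ] at h1
  have hwQ : ∀ (σ τ : T) (i : Fin (d + 1)), τ i = σ i → w τ ∈ Q σ i :=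
    fun σ τ i h => subset_convexHull ℝ _ ⟨τ, h, rfl⟩
  have hQeq : ∀ (σ σ' : T) (i : Fin (d + 1)), σ i = σ' i → Q σ i = Q σ' i := by
    intro σ σ' i h
    simp only [hQdef, h]
  have hQcpt : ∀ σ i, IsCompact (Q σ i) :=
    fun σ i => ((Set.toFinite _).image w).isCompact_convexHull ℝ
  -- intersections and their minimal-norm points
  set C : T → Set (EuclideanSpace ℝ (Fin d)) := (fun σ => ⋂ i, Q σ i) with hCdef
  have hCne : ∀ σ, (C σ).Nonempty :=
    fun σ => ⟨w σ, Set.mem_iInter.mpr fun i => hwQ σ σ i rfl⟩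
  have hCconv : ∀ σ, Convex ℝ (C σ) := fun σ => convex_iInter fun i => hQconv σ i
  have hCcpt : ∀ σ, IsCompact (C σ) :=
    fun σ => (hQcpt σ 0).of_isClosed_subset
      (isClosed_iInter fun i => (hQcpt σ i).isClosed) (Set.iInter_subset _ 0)
  have hpex : ∀ σ, ∃ z ∈ C σ, IsMinOn norm (C σ) z :=
    fun σ => (hCcpt σ).exists_isMinOn (hCne σ) continuous_norm.continuousOn
  choose p hpC hpmin using hpex
  obtain ⟨σ₀, hσ₀⟩ := Finite.exists_max fun σ : T => ‖p σ‖
  set x := p σ₀ with hxdef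
  have hxQ : ∀ i, x ∈ Q σ₀ i := fun i => Set.mem_iInter.mp (hpC σ₀) i
  by_cases hx0 : x = 0
  · -- degenerate case : 0 belongs to every set of every family
    refine ⟨0, (0 : (EuclideanSpace ℝ (Fin d))), ?_⟩
    intro S hS
    have hS' : S ∈ F 0 := hS
    set σ : T := Function.update (Classical.arbitrary T) 0 ⟨S, hS'⟩ with hσdef
    have h1 : p σ = 0 := by
      have h2 := hσ₀ σ
      rw [hx0, norm_zero] at h2
      exact norm_le_zero_iff.mp h2
    have h3 : p σ ∈ (σ 0 : Set (EuclideanSpace ℝ (Fin d))) := hQsub σ 0 (Set.mem_iInter.mp (hpC σ) 0)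
    rw [h1] at h3
    simpa [hσdef, Function.update_self] using h3
  · -- main case
    -- generators of the normal cones
    set gen : Fin (d + 1) → T → (EuclideanSpace ℝ (Fin d)) :=
      (fun i τ => if τ i = σ₀ i then w τ - x else 0) with hgen
    set K : Fin (d + 1) → ConvexCone ℝ (EuclideanSpace ℝ (Fin d)) :=
      (fun i => Set.innerDualCone (Set.range (gen i))) with hKdef
    have hK0 : ∀ i, (0 : (EuclideanSpace ℝ (Fin d))) ∈ K i := fun i => pointed_innerDualCone _
    have hKmem : ∀ (i : Fin (d + 1)) (c : (EuclideanSpace ℝ (Fin d))),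
        c ∈ K i ↔ ∀ τ : T, 0 ≤ @inner ℝ _ _ (gen i τ) c := by
      intro i c
      rw [hKdef, mem_innerDualCone]
      constructor
      · intro h τ; exact h _ ⟨τ, rfl⟩
      · rintro h z ⟨τ, rfl⟩; exact h τ
    have hKQ : ∀ (i : Fin (d + 1)) (c : (EuclideanSpace ℝ (Fin d))), c ∈ K i →
        ∀ y ∈ Q σ₀ i, 0 ≤ @inner ℝ _ _ c (y - x) := by
      intro i c hc y hy
      have hlin : IsLinearMap ℝ (fun y : (EuclideanSpace ℝ (Fin d)) => @inner ℝ _ _ c y) :=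
        ⟨fun a b => inner_add_right c a b, fun r a => real_inner_smul_right c a r⟩
      have hsub : Q σ₀ i ⊆ {y : (EuclideanSpace ℝ (Fin d)) | @inner ℝ _ _ c x ≤ @inner ℝ _ _ c y} := by
        apply convexHull_min _ (convex_halfSpace_ge hlin _)
        rintro z ⟨τ, hτ, rfl⟩
        have hτ' : τ i = σ₀ i := hτ
        have h0 : 0 ≤ @inner ℝ _ _ (gen i τ) c := (hKmem i c).mp hc τ
        have hgeneq : gen i τ = w τ - x := by simp [hgen, hτ']
        rw [hgeneq, real_inner_comm, inner_sub_right] at h0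
        simp only [Set.mem_setOf_eq]
        linarith
      have := hsub hy
      simp only [Set.mem_setOf_eq] at this
      rw [inner_sub_right]
      linarith
    -- the sum of the normal cones and its restricted versions
    set M : Set (EuclideanSpace ℝ (Fin d)) := {m | ∃ c : Fin (d + 1) → (EuclideanSpace ℝ (Fin d)), (∀ i, c i ∈ K i) ∧ m = ∑ i, c i} with hMdef
    set Mj : Fin (d + 1) → Set (EuclideanSpace ℝ (Fin d)) :=
      (fun j => {m | ∃ c : Fin (d + 1) → (EuclideanSpace ℝ (Fin d)),
        (∀ i, c i ∈ K i) ∧ c j = 0 ∧ m = ∑ i, c i}) with hMjdef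
    -- every element of M lies in some Mj
    have hMU : M ⊆ ⋃ j, Mj j := by
      rintro m ⟨c, hc, rfl⟩
      have hdep : ¬ LinearIndependent ℝ c := by
        intro h
        have hcard := h.fintype_card_le_finrank
        rw [finrank_euclideanSpace_fin] at hcard
        simp at hcard
      obtain ⟨g0, hg0, i₁, hgi₁⟩ := Fintype.not_linearIndependent_iff.mp hdep
      have hposex : ∃ g : Fin (d + 1) → ℝ, (∑ i, g i • c i = 0) ∧ ∃ i, 0 < g i := by
        rcases hgi₁.lt_or_gt with hneg | hpos
        · refine ⟨-g0, ?_, i₁, by simpa using hneg⟩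
          simp only [Pi.neg_apply, neg_smul, Finset.sum_neg_distrib, hg0, neg_zero]
        · exact ⟨g0, hg0, i₁, hpos⟩
      obtain ⟨g, hg, i₁, hgi₁⟩ := hposex
      obtain ⟨j, hj⟩ := Finite.exists_max g
      have hgj : 0 < g j := lt_of_lt_of_le hgi₁ (hj i₁)
      refine Set.mem_iUnion.mpr ⟨j, (fun i => (1 - g i / g j) • c i), ?_, ?_, ?_⟩
      · intro i
        have hcoef : 0 ≤ 1 - g i / g j := by
          rw [sub_nonneg]
          exact (div_le_one hgj).mpr (hj i)
        show (1 - g i / g j) • c i ∈ K i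
        rcases hcoef.lt_or_eq with h | h
        · exact (K i).smul_mem h (hc i)
        · rw [← h, zero_smul]; exact hK0 i
      · show (1 - g j / g j) • c j = 0
        rw [div_self hgj.ne', sub_self, zero_smul]
      · show ∑ i, c i = ∑ i : Fin (d + 1), (1 - g i / g j) • c i
        have hsum : ∑ i, (1 - g i / g j) • c i
            = (∑ i, c i) - (g j)⁻¹ • ∑ i, g i • c i := by
          rw [Finset.smul_sum, ← Finset.sum_sub_distrib]
          refine Finset.sum_congr rfl fun i _ => ?_
          rw [sub_smul, one_smul, smul_smul, div_eq_inv_mul]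
        rw [hsum, hg, smul_zero, sub_zero]
    -- x lies in the closure of M
    have hxM : x ∈ closure M := by
      by_contra hxM
      set MC : ConvexCone ℝ (EuclideanSpace ℝ (Fin d)) :=
        { carrier := M
          smul_mem' := by
            rintro a ha m ⟨c, hc, rfl⟩
            exact ⟨fun i => a • c i, fun i => (K i).smul_mem ha (hc i),
              by rw [Finset.smul_sum]⟩
          add_mem' := by
            rintro m ⟨c, hc, rfl⟩ m' ⟨c', hc', rfl⟩
            exact ⟨c + c', fun i => (K i).add_mem (hc i) (hc' i),
              by rw [← Finset.sum_add_distrib]; rfl⟩ } with hMC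
      have h0M : (0 : (EuclideanSpace ℝ (Fin d))) ∈ M := ⟨fun _ => 0, fun i => hK0 i, by simp⟩
      have hMCcl : (MC.closure : Set (EuclideanSpace ℝ (Fin d))) = closure M := ConvexCone.coe_closure MC
      obtain ⟨u, hu1, hu2⟩ := MC.closure.hyperplane_separation_of_nonempty_of_isClosed_of_nmem
        (by rw [hMCcl]; exact ⟨0, subset_closure h0M⟩)
        (by rw [hMCcl]; exact isClosed_closure)
        (by rw [← SetLike.mem_coe, hMCcl]; exact hxM)
      have hu1' : ∀ m ∈ M, 0 ≤ @inner ℝ _ _ m u := by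
        intro m hm
        exact hu1 m (by rw [← SetLike.mem_coe, hMCcl]; exact subset_closure hm)
      have hKu : ∀ (i : Fin (d + 1)), ∀ c ∈ K i, 0 ≤ @inner ℝ _ _ c u := by
        intro i c hc
        apply hu1'
        refine ⟨Pi.single i c, ?_, ?_⟩
        · intro j
          rcases eq_or_ne j i with rfl | h
          · simpa using hc
          · rw [Pi.single_eq_of_ne h]; exact hK0 j
        · rw [Finset.sum_pi_single']
          simp
      have hune : u ≠ 0 := by
        intro h
        rw [h, inner_zero_left] at hu2
        exact lt_irrefl 0 hu2
      -- u belongs to each generated cone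
      have hucone : ∀ i : Fin (d + 1), u ∈ coneOn (gen i) Finset.univ := by
        intro i
        apply mem_coneOn_univ_of_dual
        intro c hcge
        exact hKu i c ((hKmem i c).mpr hcge)
      choose l hl0 hlu using hucone
      set P : Fin (d + 1) → Finset T :=
        (fun i => Finset.univ.filter (fun τ => τ i = σ₀ i)) with hPdef
      have husum : ∀ i, u = ∑ τ ∈ P i, l i τ • (w τ - x) := by
        intro i
        rw [hlu i, hPdef]
        rw [Finset.sum_filter]
        refine Finset.sum_congr rfl fun τ _ => ?_
        by_cases h : τ i = σ₀ i <;> simp [hgen, h]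
      set s : Fin (d + 1) → ℝ := (fun i => ∑ τ ∈ P i, l i τ) with hsdef
      have hs0 : ∀ i, 0 ≤ s i := fun i => Finset.sum_nonneg fun τ _ => hl0 i τ
      have hspos : ∀ i, 0 < s i := by
        intro i
        rcases (hs0 i).lt_or_eq with h | h
        · exact h
        exfalso
        apply hune
        have hz : ∀ τ ∈ P i, l i τ = 0 :=
          (Finset.sum_eq_zero_iff_of_nonneg fun τ _ => hl0 i τ).mp h.symm
        rw [husum i]
        exact Finset.sum_eq_zero fun τ hτ => by rw [hz τ hτ, zero_smul]
      have hyi : ∀ i, x + (s i)⁻¹ • u ∈ Q σ₀ i := by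
        intro i
        have hwsum : ∑ τ ∈ P i, (l i τ / s i) = 1 := by
          rw [← Finset.sum_div, div_self (hspos i).ne']
        have heq : x + (s i)⁻¹ • u = ∑ τ ∈ P i, (l i τ / s i) • w τ := by
          have hterm : ∀ τ ∈ P i, (s i)⁻¹ • (l i τ • (w τ - x))
              = (l i τ / s i) • w τ - (l i τ / s i) • x := by
            intro τ _
            rw [smul_smul, ← smul_sub, div_eq_inv_mul]
          rw [husum i, Finset.smul_sum, Finset.sum_congr rfl hterm,
            Finset.sum_sub_distrib, ← Finset.sum_smul, hwsum, one_smul]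
          abel
        rw [heq]
        refine (hQconv σ₀ i).sum_mem (fun τ _ => div_nonneg (hl0 i τ) (hs0 i)) hwsum ?_
        intro τ hτ
        exact hwQ σ₀ τ i (Finset.mem_filter.mp hτ).2
      obtain ⟨i₂, hi₂⟩ := Finite.exists_min fun i : Fin (d + 1) => (s i)⁻¹
      set t := (s i₂)⁻¹ with htdef
      have htpos : 0 < t := inv_pos.mpr (hspos i₂)
      have hyC : ∀ t' : ℝ, 0 < t' → t' ≤ t → x + t' • u ∈ C σ₀ := by
        intro t' h1 h2
        rw [hCdef]
        refine Set.mem_iInter.mpr fun i => ?_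
        have hts : t' * s i ≤ 1 := by
          have h3 : t' ≤ (s i)⁻¹ := h2.trans (hi₂ i)
          calc t' * s i ≤ (s i)⁻¹ * s i := by
                exact mul_le_mul_of_nonneg_right h3 (hs0 i)
            _ = 1 := inv_mul_cancel₀ (hspos i).ne'
        have hcomb := (hQconv σ₀ i) (hxQ i) (hyi i)
          (a := 1 - t' * s i) (b := t' * s i)
          (by linarith) (mul_nonneg h1.le (hs0 i)) (by ring)
        have hptg : (1 - t' * s i) • x + (t' * s i) • (x + (s i)⁻¹ • u)
            = x + t' • u := by
          have hscal : (t' * s i) * (s i)⁻¹ = t' := by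
            rw [mul_assoc, mul_inv_cancel₀ (hspos i).ne', mul_one]
          rw [smul_add, smul_smul, hscal]
          module
        rwa [hptg] at hcomb
      set a : ℝ := @inner ℝ _ _ u x with hadef
      have ha : a < 0 := hu2
      set t' : ℝ := min t (-a / ‖u‖ ^ 2) with ht'def
      have hnu : 0 < ‖u‖ ^ 2 := pow_pos (norm_pos_iff.mpr hune) 2
      have ht'pos : 0 < t' := lt_min htpos (div_pos (by linarith) hnu)
      have hmem := hyC t' ht'pos (min_le_left _ _)
      have hminle : ‖x‖ ≤ ‖x + t' • u‖ := hpmin σ₀ hmem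
      have hlt : ‖x + t' • u‖ ^ 2 < ‖x‖ ^ 2 := by
        have hexp : ‖x + t' • u‖ ^ 2
            = ‖x‖ ^ 2 + 2 * (t' * a) + t' ^ 2 * ‖u‖ ^ 2 := by
          have hcomm : @inner ℝ _ _ x u = a := by rw [hadef]; exact real_inner_comm u x
          rw [norm_add_sq_real, real_inner_smul_right, norm_smul, hcomm,
            Real.norm_eq_abs, abs_of_pos ht'pos]
          ring
        have hbound : t' * ‖u‖ ^ 2 ≤ -a := by
          have := min_le_right t (-a / ‖u‖ ^ 2)
          rw [← ht'def] at this
          exact (le_div_iff₀ hnu).mp this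
        nlinarith [ht'pos]
      nlinarith [norm_nonneg x, norm_nonneg (x + t' • u)]
    -- pass to one of the Mj
    have hxU : x ∈ ⋃ j, closure (Mj j) := by
      have h1 : closure M ⊆ ⋃ j, closure (Mj j) :=
        closure_minimal (hMU.trans (Set.iUnion_mono fun j => subset_closure))
          (isClosed_iUnion_of_finite fun j => isClosed_closure)
      exact h1 hxM
    obtain ⟨j, hj⟩ := Set.mem_iUnion.mp hxU
    -- conclusion : x belongs to every member of the family F j
    refine ⟨j, x, ?_⟩
    intro S hS
    have hS' : S ∈ F j := hS
    set σ' : T := Function.update σ₀ j ⟨S, hS'⟩ with hσ'def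
    set y := p σ' with hydef
    have hyD : ∀ i, i ≠ j → y ∈ Q σ₀ i := by
      intro i hij
      have h1 : y ∈ Q σ' i := Set.mem_iInter.mp (hpC σ') i
      rwa [hQeq σ' σ₀ i (by rw [hσ'def, Function.update_of_ne hij])] at h1
    have hinner : 0 ≤ @inner ℝ _ _ x (y - x) := by
      have hcl : closure (Mj j) ⊆ {m : (EuclideanSpace ℝ (Fin d)) | 0 ≤ @inner ℝ _ _ m (y - x)} := by
        apply closure_minimal
        · rintro m ⟨c, hc, hcj, rfl⟩
          simp only [Set.mem_setOf_eq, sum_inner]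
          refine Finset.sum_nonneg fun i _ => ?_
          rcases eq_or_ne i j with rfl | h
          · rw [hcj, inner_zero_left]
          · exact hKQ i (c i) (hc i) y (hyD i h)
        · exact isClosed_le continuous_const
            (Continuous.inner continuous_id continuous_const)
      exact hcl hj
    have hnorm : ‖y‖ ≤ ‖x‖ := hσ₀ σ'
    have h5 : y ∈ (σ' j : Set (EuclideanSpace ℝ (Fin d))) :=
      hQsub σ' j (Set.mem_iInter.mp (hpC σ') j)
    clear_value y
    have hyx : y = x := by
      have h1 : ‖y‖ ^ 2 = ‖x‖ ^ 2 + 2 * @inner ℝ _ _ x (y - x) + ‖y - x‖ ^ 2 := by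
        have h2 := norm_add_sq_real x (y - x)
        rwa [add_sub_cancel] at h2
      have h2 : ‖y‖ ^ 2 ≤ ‖x‖ ^ 2 := pow_le_pow_left₀ (norm_nonneg y) hnorm 2
      have h6 : ‖y - x‖ = 0 := by
        revert hinner h1
        generalize @inner ℝ _ _ x (y - x) = r
        intro hinner h1
        have h3 : ‖y - x‖ ^ 2 ≤ 0 := by linarith only [h1, h2, hinner]
        have h4 : ‖y - x‖ ^ 2 = 0 := le_antisymm h3 (sq_nonneg _)
        exact (pow_eq_zero_iff (by norm_num : (2:ℕ) ≠ 0)).mp h4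
      have h7 : y - x = 0 := norm_eq_zero.mp h6
      exact sub_eq_zero.mp h7
    rw [hyx] at h5
    simpa [hσ'def, Function.update_self] using h5
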